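/- arXiv:2008.12911 — 3 statements merged into one kernel-verified Lean document; each statement's English description precedes it below -/
import Mathlib

section
/- Let k ≥ 2 be an integer, ρ > 0, s ∈ (0,1), and let b_j = ρ (cos(2πj/k), sin(2πj/k)) for j = 0,…,k-1 be the vertices of a regular k-gon inscribed in the circle of radius ρ. Then for every j ∈ {0,…,k-1}: Σ_{l≠j} (b_j - b_l)/|b_j - b_l|^{4-2s} = 2^{s-2} ρ^{2s-4} ( Σ_{m=1}^{k-1} (1 - cos(2πm/k))^{s-1} ) · b_j. -/
open Real Finset RealInnerProductSpace

noncomputable section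

/-- The plane `ℝ²` with the Euclidean norm. -/
abbrev E2 := EuclideanSpace ℝ (Fin 2)

/-- For `a = (a₁, a₂)`, `perp a = a^⊥ = (a₂, -a₁)`. -/
def perp (a : E2) : E2 := !₂[a 1, -(a 0)]

/-- `e₁ = (1,0)`. -/
def e1 : E2 := !₂[1, 0]

/-- `e₂ = (0,1)`. -/
def e2 : E2 := !₂[0, 1]

/-- `K_s = Γ(2-s) / (2^(2s-1) π Γ(s))`. -/
def Ks (s : ℝ) : ℝ := Real.Gamma (2 - s) / (2 ^ (2*s - 1) * Real.pi * Real.Gamma s)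

/-- Counterclockwise rotation of the plane by angle `θ`. -/
def rot (θ : ℝ) (a : E2) : E2 :=
  !₂[Real.cos θ * a 0 - Real.sin θ * a 1, Real.sin θ * a 0 + Real.cos θ * a 1]

private lemma one_sub_cos_pos {k m : ℕ} (hm : m ∈ Finset.Ico 1 k) :
    0 < 1 - Real.cos (2*Real.pi*(m:ℝ)/k) := by
  rw [Finset.mem_Ico] at hm
  have hk : (0:ℝ) < k := by exact_mod_cast Nat.lt_of_le_of_lt (Nat.zero_le m) hm.2
  have hm0 : (1:ℝ) ≤ m := by exact_mod_cast hm.1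
  have hmk : (m:ℝ) < k := by exact_mod_cast hm.2
  have hπ := Real.pi_pos
  have hx0 : 0 < 2*Real.pi*(m:ℝ)/k := by positivity
  have hx2 : 2*Real.pi*(m:ℝ)/k < 2*Real.pi := by
    rw [div_lt_iff₀ hk]; nlinarith
  have hle := Real.cos_le_one (2*Real.pi*(m:ℝ)/k)
  have hne : Real.cos (2*Real.pi*(m:ℝ)/k) ≠ 1 := by
    intro h
    rw [Real.cos_eq_one_iff_of_lt_of_lt (by linarith) hx2] at h
    linarith
  have := lt_of_le_of_ne hle hne
  linarith

private lemma sum_h_zero (k : ℕ) (s : ℝ) :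
    ∑ m ∈ Finset.Ico 1 k,
      (1 - Real.cos (2*Real.pi*(m:ℝ)/k)) ^ (s-2) * Real.sin (2*Real.pi*(m:ℝ)/k) = 0 := by
  rcases Nat.eq_zero_or_pos k with rfl | hk0
  · simp
  have hkR : (0:ℝ) < k := by exact_mod_cast hk0
  apply Finset.sum_involution (fun a _ => k - a)
  · intro a ha
    rw [Finset.mem_Ico] at ha
    have hak : a ≤ k := le_of_lt ha.2
    have hcast : ((k - a : ℕ) : ℝ) = (k : ℝ) - a := by
      push_cast [Nat.cast_sub hak]; ring
    have hang : 2*Real.pi*((k - a : ℕ):ℝ)/k = 2*Real.pi - 2*Real.pi*(a:ℝ)/k := by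
      rw [hcast]; field_simp
    have hcos : Real.cos (2*Real.pi*((k - a : ℕ):ℝ)/k) = Real.cos (2*Real.pi*(a:ℝ)/k) := by
      rw [hang, Real.cos_sub]; simp
    have hsin : Real.sin (2*Real.pi*((k - a : ℕ):ℝ)/k) = -Real.sin (2*Real.pi*(a:ℝ)/k) := by
      rw [hang, Real.sin_sub]; simp
    rw [hcos, hsin]; ring
  · intro a ha hfa
    rw [Finset.mem_Ico] at ha
    intro h
    apply hfa
    have h2a : 2 * a = k := by omega
    have : (a : ℝ) = (k : ℝ) / 2 := by
      have : ((2*a : ℕ):ℝ) = (k:ℝ) := by exact_mod_cast h2a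
      push_cast at this
      linarith
    have hang : 2*Real.pi*(a:ℝ)/k = Real.pi := by
      rw [this]; field_simp
    rw [hang, Real.sin_pi, mul_zero]
  · intro a ha
    rw [Finset.mem_Ico] at ha ⊢
    omega
  · intro a ha
    rw [Finset.mem_Ico] at ha
    omega


open Fin.NatCast

/-- for the vertices `b_j = ρ(cos(2πj/k), sin(2πj/k))` of a regular `k`-gon,
`Σ_{l≠j} (b_j - b_l)/|b_j - b_l|^{4-2s}
  = 2^{s-2} ρ^{2s-4} (Σ_{m=1}^{k-1} (1 - cos(2πm/k))^{s-1}) b_j`. -/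
theorem statement3 (k : ℕ) (hk : 2 ≤ k) (ρ : ℝ) (hρ : 0 < ρ)
    (s : ℝ) (hs : s ∈ Set.Ioo (0:ℝ) 1)
    (b : Fin k → E2)
    (hb : ∀ j : Fin k,
      b j = ρ • (!₂[Real.cos (2*Real.pi*(j:ℝ)/k), Real.sin (2*Real.pi*(j:ℝ)/k)] : E2)) :
    ∀ j : Fin k,
      ∑ l ∈ Finset.univ \ {j}, ((1:ℝ) / ‖b j - b l‖ ^ (4 - 2*s)) • (b j - b l)
        = ((2:ℝ) ^ (s - 2) * ρ ^ (2*s - 4) *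
            ∑ m ∈ Finset.Ico 1 k, (1 - Real.cos (2*Real.pi*(m:ℝ)/k)) ^ (s - 1)) • b j := by
  haveI : NeZero k := ⟨by omega⟩
  intro j
  have hkR : (0:ℝ) < k := by positivity
  set θ : ℝ := 2*Real.pi*(j:ℝ)/k with hθ
  -- value of b at shifted index
  have hbval : ∀ m : ℕ, b (j + (m:Fin k)) =
      ρ • (!₂[Real.cos (θ + 2*Real.pi*(m:ℝ)/k), Real.sin (θ + 2*Real.pi*(m:ℝ)/k)] : E2) := by
    intro m
    rw [hb]
    have hval : ((j + (m:Fin k)).val) = (j.val + m) % k := by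
      simp [Fin.val_add, Fin.val_natCast, Nat.add_mod]
    have hmd := Nat.mod_add_div (j.val + m) k
    set q := (j.val + m) / k with hq
    have hcast : (((j + (m:Fin k)) : Fin k).val : ℝ) = (j.val:ℝ) + m - k * q := by
      rw [hval]
      have : (((j.val + m) % k : ℕ) : ℝ) + k * q = (j.val:ℝ) + m := by exact_mod_cast hmd
      linarith
    have hang : 2*Real.pi*(((j + (m:Fin k)) : Fin k).val : ℝ)/k
        = (θ + 2*Real.pi*(m:ℝ)/k) - ((q:ℤ):ℝ) * (2*Real.pi) := by
      rw [hcast, hθ]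
      push_cast
      field_simp
    have hc : Real.cos (2*Real.pi*(((j + (m:Fin k)) : Fin k) : ℝ)/k)
        = Real.cos (θ + 2*Real.pi*(m:ℝ)/k) := by
      rw [show (((j + (m:Fin k)) : Fin k) : ℝ) = (((j + (m:Fin k)) : Fin k).val : ℝ) from rfl,
        hang, Real.cos_sub_int_mul_two_pi]
    have hsn : Real.sin (2*Real.pi*(((j + (m:Fin k)) : Fin k) : ℝ)/k)
        = Real.sin (θ + 2*Real.pi*(m:ℝ)/k) := by
      rw [show (((j + (m:Fin k)) : Fin k) : ℝ) = (((j + (m:Fin k)) : Fin k).val : ℝ) from rfl,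
        hang, Real.sin_sub_int_mul_two_pi]
    rw [hc, hsn]
  -- components of the difference
  have hcomp0 : ∀ m : ℕ, (b j - b (j + (m:Fin k))) 0
      = ρ * (Real.cos θ - Real.cos (θ + 2*Real.pi*(m:ℝ)/k)) := by
    intro m
    rw [hb j, hbval m]
    simp [PiLp.sub_apply, PiLp.smul_apply, smul_eq_mul]
    ring
  have hcomp1 : ∀ m : ℕ, (b j - b (j + (m:Fin k))) 1
      = ρ * (Real.sin θ - Real.sin (θ + 2*Real.pi*(m:ℝ)/k)) := by
    intro m
    rw [hb j, hbval m]
    simp [PiLp.sub_apply, PiLp.smul_apply, smul_eq_mul]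
    ring
  -- norm of the difference
  have hnorm : ∀ m : ℕ, ‖b j - b (j + (m:Fin k))‖
      = Real.sqrt (2*ρ^2*(1 - Real.cos (2*Real.pi*(m:ℝ)/k))) := by
    intro m
    rw [EuclideanSpace.norm_eq]
    congr 1
    rw [Fin.sum_univ_two, hcomp0 m, hcomp1 m]
    simp only [Real.norm_eq_abs, sq_abs]
    rw [Real.cos_add, Real.sin_add]
    have p1 := Real.sin_sq_add_cos_sq θ
    have p2 := Real.sin_sq_add_cos_sq (2*Real.pi*(m:ℝ)/k)
    linear_combination (ρ^2*((1-Real.cos (2*Real.pi*(m:ℝ)/k))^2+Real.sin (2*Real.pi*(m:ℝ)/k)^2))*p1 + ρ^2*p2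
  obtain ⟨hs0, hs1⟩ := hs
  set A : ℝ := (2:ℝ)^(s-2)*ρ^(2*s-4) with hA
  have hrho2 : (ρ^2:ℝ)^(s-2) = ρ^(2*s-4) := by
    rw [← Real.rpow_natCast ρ 2, ← Real.rpow_mul hρ.le]
    congr 1
    push_cast; ring
  have hcoef : ∀ m ∈ Finset.Ico 1 k,
      (1:ℝ)/‖b j - b (j + (m:Fin k))‖^(4-2*s)
        = A * (1 - Real.cos (2*Real.pi*(m:ℝ)/k))^(s-2) := by
    intro m hm
    have hx := one_sub_cos_pos hm
    set x := 1 - Real.cos (2*Real.pi*(m:ℝ)/k) with hxdef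
    have ha : (0:ℝ) < 2*ρ^2*x := by positivity
    rw [hnorm m, ← hxdef, Real.sqrt_eq_rpow, ← Real.rpow_mul ha.le,
      show (1/2) * (4-2*s) = 2 - s by ring, one_div, ← Real.rpow_neg ha.le,
      show -(2-s) = s - 2 by ring,
      Real.mul_rpow (by positivity) hx.le, Real.mul_rpow (by norm_num) (by positivity),
      hrho2, hA]
  set p : E2 := ρ • (!₂[Real.sin θ, -Real.cos θ] : E2) with hp
  have hbj0 : b j 0 = ρ * Real.cos θ := by rw [hb j]; simp [hθ]
  have hbj1 : b j 1 = ρ * Real.sin θ := by rw [hb j]; simp [hθ]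
  have hp0 : p 0 = ρ * Real.sin θ := by simp [hp]
  have hp1 : p 1 = -(ρ * Real.cos θ) := by simp [hp]
  have hterm : ∀ m ∈ Finset.Ico 1 k,
      ((1:ℝ)/‖b j - b (j + (m:Fin k))‖^(4-2*s)) • (b j - b (j + (m:Fin k)))
        = (A * (1 - Real.cos (2*Real.pi*(m:ℝ)/k))^(s-1)) • b j
          + (A * ((1 - Real.cos (2*Real.pi*(m:ℝ)/k))^(s-2) * Real.sin (2*Real.pi*(m:ℝ)/k))) • p := by
    intro m hm
    have hx := one_sub_cos_pos hm
    have hpow : (1 - Real.cos (2*Real.pi*(m:ℝ)/k))^(s-1)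
        = (1 - Real.cos (2*Real.pi*(m:ℝ)/k))^(s-2) * (1 - Real.cos (2*Real.pi*(m:ℝ)/k)) := by
      rw [← Real.rpow_add_one hx.ne' (s-2)]
      congr 1; ring
    rw [hcoef m hm]
    ext i
    fin_cases i
    · simp only [PiLp.add_apply, PiLp.smul_apply, smul_eq_mul, Fin.mk_zero, Fin.mk_one, Fin.isValue]
      rw [hcomp0 m, hbj0, hp0, hpow, Real.cos_add]
      ring
    · simp only [PiLp.add_apply, PiLp.smul_apply, smul_eq_mul, Fin.mk_zero, Fin.mk_one, Fin.isValue]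
      rw [hcomp1 m, hbj1, hp1, hpow, Real.sin_add]
      ring
  have hre : ∑ l ∈ Finset.univ \ {j}, ((1:ℝ)/‖b j - b l‖^(4-2*s)) • (b j - b l)
      = ∑ m ∈ Finset.Ico 1 k,
          ((1:ℝ)/‖b j - b (j + (m:Fin k))‖^(4-2*s)) • (b j - b (j + (m:Fin k))) := by
    refine (Finset.sum_nbij' (i := fun m : ℕ => j + (m:Fin k))
      (j := fun l : Fin k => ((l - j : Fin k) : ℕ)) ?_ ?_ ?_ ?_ ?_).symm
    · intro m hm
      rw [Finset.mem_Ico] at hm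
      simp only [Finset.mem_sdiff, Finset.mem_univ, Finset.mem_singleton, true_and]
      intro h
      have : (m : Fin k) = 0 := by
        have := congrArg (fun z => z - j) h
        simpa [add_sub_cancel_left] using this
      have hv : ((m : Fin k)).val = 0 := by rw [this]; rfl
      rw [Fin.val_natCast, Nat.mod_eq_of_lt hm.2] at hv
      omega
    · intro l hl
      simp only [Finset.mem_sdiff, Finset.mem_univ, Finset.mem_singleton, true_and] at hl
      rw [Finset.mem_Ico]
      have hne : l - j ≠ 0 := sub_ne_zero.mpr hl
      have hv : ((l - j : Fin k)).val ≠ (0:ℕ) := by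
        intro h0
        exact hne (Fin.ext (by rw [h0, Fin.val_zero]))
      have h1 : 1 ≤ ((l - j : Fin k) : ℕ) := by
        omega
      exact ⟨h1, (l - j).isLt⟩
    · intro m hm
      rw [Finset.mem_Ico] at hm
      show ((j + (m : Fin k) - j : Fin k) : ℕ) = m
      rw [add_sub_cancel_left, Fin.val_natCast, Nat.mod_eq_of_lt hm.2]
    · intro l _
      show j + ((((l - j : Fin k) : ℕ)) : Fin k) = l
      rw [Fin.cast_val_eq_self, add_sub_cancel]
    · intro m _
      rfl
  rw [hre, Finset.sum_congr rfl hterm, Finset.sum_add_distrib, ← Finset.sum_smul, ← Finset.sum_smul]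
  have h2 : ∑ m ∈ Finset.Ico 1 k,
      A * ((1 - Real.cos (2*Real.pi*(m:ℝ)/k))^(s-2) * Real.sin (2*Real.pi*(m:ℝ)/k)) = 0 := by
    rw [← Finset.mul_sum, sum_h_zero k s, mul_zero]
  rw [h2, zero_smul, add_zero, ← Finset.mul_sum]
end
end

section
/- Let k ≥ 2 be an integer, ρ > 0, m ∈ ℝ, s ∈ (0,1). Let b_j = ρ (cos(2πj/k), sin(2πj/k)) and m_j = m for j = 0,…,k-1, and set α = (m/ρ^{4-2s}) · (Γ(2-s)/(2^{s+1} π Γ(s))) · Σ_{l=1}^{k-1} (1 - cos(2πl/k))^{s-1}. Then (b₀,…,b_{k-1}) with intensities (m₀,…,m_{k-1}) solves the rotating system with angular speed α, i.e. for every j: α b_j = -K_s Σ_{i≠j} m_i (b_i - b_j)/|b_i - b_j|^{4-2s}. -/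
open Real Finset RealInnerProductSpace

noncomputable section

lemma val_add_cast (k : ℕ) [NeZero k] (i j : Fin k) :
    ∃ n : ℤ, (((i + j : Fin k) : ℕ) : ℝ) = ((i : ℕ) : ℝ) + ((j : ℕ) : ℝ) + n * k := by
  rcases Nat.lt_or_ge ((i:ℕ)+(j:ℕ)) k with h | h
  · exact ⟨0, by rw [Fin.val_add_eq_of_add_lt h]; push_cast; ring⟩
  · refine ⟨-1, ?_⟩
    have h2 : ((i+j : Fin k) : ℕ) = (i:ℕ)+(j:ℕ) - k := by
      rw [Fin.val_add_eq_ite]; simp [h]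
    rw [h2, Nat.cast_sub h]; push_cast; ring

lemma val_neg_cast (k : ℕ) [NeZero k] (l : Fin k) :
    ∃ n : ℤ, (((-l : Fin k) : ℕ) : ℝ) = -((l : ℕ) : ℝ) + n * k := by
  by_cases h : l = 0
  · exact ⟨0, by simp [h]⟩
  · refine ⟨1, ?_⟩
    have hl : 0 < (l:ℕ) := Nat.pos_of_ne_zero (fun hz => h (Fin.ext (by simp [hz])))
    have hlt := l.isLt
    have h2 : ((-l : Fin k) : ℕ) = k - (l:ℕ) := by
      rw [Fin.neg_def]
      exact Nat.mod_eq_of_lt (by omega)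
    rw [h2, Nat.cast_sub (le_of_lt hlt)]; push_cast; ring

lemma cos_angle_of_val (k : ℕ) (hk : (k:ℝ) ≠ 0) (x y : ℝ) (n : ℤ) (h : x = y + n * k) :
    Real.cos (2*π*x/k) = Real.cos (2*π*y/k) := by
  have : 2*π*x/k = 2*π*y/k + n * (2*π) := by rw [h]; field_simp
  rw [this, Real.cos_add_int_mul_two_pi]

lemma sin_angle_of_val (k : ℕ) (hk : (k:ℝ) ≠ 0) (x y : ℝ) (n : ℤ) (h : x = y + n * k) :
    Real.sin (2*π*x/k) = Real.sin (2*π*y/k) := by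
  have : 2*π*x/k = 2*π*y/k + n * (2*π) := by rw [h]; field_simp
  rw [this, Real.sin_add_int_mul_two_pi]

/-- the regular `k`-gon with equal intensities `m` solves the rotating system
with angular speed `α = (m/ρ^{4-2s}) (Γ(2-s)/(2^{s+1} π Γ(s))) Σ_{l=1}^{k-1}(1-cos(2πl/k))^{s-1}`. -/
theorem statement4 (k : ℕ) (hk : 2 ≤ k) (ρ : ℝ) (hρ : 0 < ρ) (m : ℝ)
    (s : ℝ) (hs : s ∈ Set.Ioo (0:ℝ) 1)
    (b : Fin k → E2)
    (hb : ∀ j : Fin k,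
      b j = ρ • (!₂[Real.cos (2*Real.pi*(j:ℝ)/k), Real.sin (2*Real.pi*(j:ℝ)/k)] : E2))
    (mm : Fin k → ℝ) (hm : ∀ j, mm j = m)
    (α : ℝ)
    (hα : α = m / ρ ^ (4 - 2*s) * (Real.Gamma (2-s) / (2 ^ (s+1) * Real.pi * Real.Gamma s)) *
        ∑ l ∈ Finset.Ico 1 k, (1 - Real.cos (2*Real.pi*(l:ℝ)/k)) ^ (s - 1)) :
    ∀ j : Fin k, α • b j = -((Ks s) • ∑ i ∈ Finset.univ \ {j},
        (mm i / ‖b i - b j‖ ^ (4 - 2*s)) • (b i - b j)) := by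
  obtain ⟨hs0, hs1⟩ := hs
  haveI : NeZero k := ⟨by omega⟩
  have hkR : (k:ℝ) ≠ 0 := Nat.cast_ne_zero.mpr (by omega)
  have hkR' : (0:ℝ) < k := by positivity
  have hπ := Real.pi_pos
  intro j
  set θ : ℝ := 2*π*(j:ℝ)/k with hθ
  set u : E2 := !₂[Real.cos θ, Real.sin θ] with hu
  set w : E2 := !₂[-Real.sin θ, Real.cos θ] with hw
  set φ : Fin k → ℝ := fun l => 2*π*((l:ℕ):ℝ)/k with hφ
  -- Claim A: decomposition of b (j+l) - b j in the (u,w) frame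
  have hA : ∀ l : Fin k, b (j + l) - b j
      = (ρ*(Real.cos (φ l) - 1)) • u + (ρ * Real.sin (φ l)) • w := by
    intro l
    obtain ⟨n, hn⟩ := val_add_cast k j l
    have hang : θ + φ l = 2*π*(((j:ℕ):ℝ) + ((l:ℕ):ℝ))/k := by
      rw [hθ, hφ]; field_simp
    have hc : Real.cos (2*π*(((j+l : Fin k):ℕ):ℝ)/k) = Real.cos (θ + φ l) := by
      rw [hang]; exact cos_angle_of_val k hkR _ _ n hn
    have hsn : Real.sin (2*π*(((j+l : Fin k):ℕ):ℝ)/k) = Real.sin (θ + φ l) := by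
      rw [hang]; exact sin_angle_of_val k hkR _ _ n hn
    rw [hb, hb]
    ext i
    fin_cases i <;>
      simp [hu, hw, hc, hsn, Real.cos_add, Real.sin_add, PiLp.smul_apply, PiLp.sub_apply,
        PiLp.add_apply] <;> ring
  -- Claim B: the norm
  have hN : ∀ l : Fin k, ‖b (j+l) - b j‖ = ρ * Real.sqrt (2*(1 - Real.cos (φ l))) := by
    intro l
    rw [hA l, EuclideanSpace.norm_eq]
    have h0 : ((ρ*(Real.cos (φ l) - 1)) • u + (ρ * Real.sin (φ l)) • w) 0
        = ρ*((Real.cos (φ l) - 1) * Real.cos θ - Real.sin (φ l) * Real.sin θ) := by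
      simp [hu, hw, PiLp.add_apply, PiLp.smul_apply]; ring
    have h1 : ((ρ*(Real.cos (φ l) - 1)) • u + (ρ * Real.sin (φ l)) • w) 1
        = ρ*((Real.cos (φ l) - 1) * Real.sin θ + Real.sin (φ l) * Real.cos θ) := by
      simp [hu, hw, PiLp.add_apply, PiLp.smul_apply]; ring
    rw [Fin.sum_univ_two, h0, h1]
    have key : ‖ρ*((Real.cos (φ l) - 1) * Real.cos θ - Real.sin (φ l) * Real.sin θ)‖^2
        + ‖ρ*((Real.cos (φ l) - 1) * Real.sin θ + Real.sin (φ l) * Real.cos θ)‖^2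
        = ρ^2 * (2*(1 - Real.cos (φ l))) := by
      rw [Real.norm_eq_abs, Real.norm_eq_abs, sq_abs, sq_abs]
      linear_combination (ρ^2*((Real.cos (φ l)-1)^2 + (Real.sin (φ l))^2)) * Real.sin_sq_add_cos_sq θ
        + ρ^2 * Real.sin_sq_add_cos_sq (φ l)
    rw [key, Real.sqrt_mul (sq_nonneg ρ), Real.sqrt_sq hρ.le]
  -- positivity of 1 - cos
  have h1c : ∀ l : Fin k, l ≠ 0 → 0 < 1 - Real.cos (φ l) := by
    intro l hl
    have hlp : 0 < ((l:ℕ):ℝ) := by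
      have : 0 < (l:ℕ) := Nat.pos_of_ne_zero (fun hz => hl (Fin.ext (by simp [hz])))
      exact_mod_cast this
    have hlk : ((l:ℕ):ℝ) < k := by exact_mod_cast l.isLt
    have hp1 : 0 < φ l := by rw [hφ]; positivity
    have hp2 : φ l < 2*π := by
      rw [hφ]
      rw [div_lt_iff₀ hkR']
      calc 2*π*((l:ℕ):ℝ) < 2*π*(k:ℝ) := by
            apply mul_lt_mul_of_pos_left hlk (by positivity)
        _ = 2*π*(k:ℝ) := rfl
    have hne : Real.cos (φ l) ≠ 1 := by
      intro hc
      have := (Real.cos_eq_one_iff_of_lt_of_lt (by linarith) hp2).mp hc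
      linarith
    have := Real.cos_le_one (φ l)
    cases' lt_or_eq_of_le this with h h
    · linarith
    · exact absurd h hne
  -- rpow of the norm
  have hNr : ∀ l : Fin k, l ≠ 0 →
      ‖b (j+l) - b j‖ ^ (4-2*s) = ρ ^ (4-2*s) * (2*(1-Real.cos (φ l))) ^ (2-s) := by
    intro l hl
    have h1 := h1c l hl
    have h2 : (0:ℝ) ≤ 2*(1-Real.cos (φ l)) := by linarith
    rw [hN l, Real.mul_rpow hρ.le (Real.sqrt_nonneg _), Real.sqrt_eq_rpow,
      ← Real.rpow_mul h2, show (1/2)*(4-2*s) = 2-s by ring]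
  -- reindex the sum
  have hreidx : ∑ i ∈ Finset.univ \ {j}, (mm i / ‖b i - b j‖ ^ (4-2*s)) • (b i - b j)
      = ∑ l ∈ Finset.univ \ {(0:Fin k)},
          (m / ‖b (j+l) - b j‖ ^ (4-2*s)) • (b (j+l) - b j) := by
    refine Finset.sum_bij' (fun i _ => i - j) (fun l _ => j + l) ?_ ?_ ?_ ?_ ?_
    · intro a ha
      simp only [Finset.mem_sdiff, Finset.mem_univ, Finset.mem_singleton, true_and] at ha ⊢
      intro h0
      apply ha
      have := congrArg (j + ·) h0
      simpa using this
    · intro a ha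
      simp only [Finset.mem_sdiff, Finset.mem_univ, Finset.mem_singleton, true_and] at ha ⊢
      intro h0
      apply ha
      have := congrArg (· - j) h0
      simpa using this
    · intro a _; simp
    · intro a _; simp
    · intro a ha
      rw [hm]
      congr 1 <;> rw [add_sub_cancel]
  rw [hreidx]
  -- decompose each term
  set X : Fin k → ℝ := fun l => ρ ^ (4-2*s) * (2*(1-Real.cos (φ l))) ^ (2-s) with hX
  set Aco : Fin k → ℝ := fun l => m * (ρ*(Real.cos (φ l) - 1)) / X l with hAco
  set Bco : Fin k → ℝ := fun l => m * (ρ * Real.sin (φ l)) / X l with hBco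
  have hterm : ∀ l ∈ Finset.univ \ {(0:Fin k)},
      (m / ‖b (j+l) - b j‖ ^ (4-2*s)) • (b (j+l) - b j) = Aco l • u + Bco l • w := by
    intro l hl
    simp only [Finset.mem_sdiff, Finset.mem_univ, Finset.mem_singleton, true_and] at hl
    rw [hNr l hl, hA l, smul_add, smul_smul, smul_smul, hAco, hBco]
    congr 1 <;> · congr 1; rw [div_mul_eq_mul_div]
  rw [Finset.sum_congr rfl hterm, Finset.sum_add_distrib, ← Finset.sum_smul, ← Finset.sum_smul]
  -- the tangential sum vanishes
  have hBsum : ∑ l ∈ Finset.univ \ {(0:Fin k)}, Bco l = 0 := by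
    have hB0 : Bco 0 = 0 := by simp [hBco, hφ]
    rw [Finset.sdiff_singleton_eq_erase, Finset.sum_erase _ hB0]
    have hodd : ∀ l : Fin k, Bco (-l) = -Bco l := by
      intro l
      obtain ⟨n, hn⟩ := val_neg_cast k l
      have hc : Real.cos (φ (-l)) = Real.cos (φ l) := by
        rw [hφ]
        simp only []
        rw [cos_angle_of_val k hkR _ _ n hn, show 2*π*(-((l:ℕ):ℝ))/k = -(2*π*((l:ℕ):ℝ)/k) by ring,
          Real.cos_neg]
      have hsn : Real.sin (φ (-l)) = -Real.sin (φ l) := by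
        rw [hφ]
        simp only []
        rw [sin_angle_of_val k hkR _ _ n hn, show 2*π*(-((l:ℕ):ℝ))/k = -(2*π*((l:ℕ):ℝ)/k) by ring,
          Real.sin_neg]
      rw [hBco]
      simp only [hX, hc, hsn]
      ring
    have key : ∑ l : Fin k, Bco l = -∑ l : Fin k, Bco l := by
      calc ∑ l : Fin k, Bco l = ∑ l : Fin k, Bco (-l) :=
            (Fintype.sum_equiv (Equiv.neg (Fin k)) _ _ (fun x => by simp)).symm
        _ = ∑ l : Fin k, -Bco l := by simp_rw [hodd]
        _ = -∑ l : Fin k, Bco l := by rw [Finset.sum_neg_distrib]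
    linarith
  rw [hBsum, zero_smul, add_zero]
  -- the radial sum
  have hS : ∑ l ∈ (Finset.univ : Finset (Fin k)).erase 0, (1 - Real.cos (φ l)) ^ (s-1)
      = ∑ l ∈ Finset.Ico 1 k, (1 - Real.cos (2*π*(l:ℝ)/k)) ^ (s - 1) := by
    refine Finset.sum_bij' (fun l _ => (l : ℕ)) (fun l hl => (⟨l, (Finset.mem_Ico.mp hl).2⟩ : Fin k)) ?_ ?_ ?_ ?_ ?_
    · intro a ha
      simp only [Finset.mem_erase, Finset.mem_univ, and_true] at ha
      simp only [Finset.mem_Ico]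
      exact ⟨Nat.pos_of_ne_zero (fun hz => ha (Fin.ext (by simp [hz]))), a.isLt⟩
    · intro a ha
      simp only [Finset.mem_Ico] at ha
      simp only [Finset.mem_erase, Finset.mem_univ, and_true]
      intro h0
      have := congrArg Fin.val h0
      simp at this
      omega
    · intro a _; simp
    · intro a _; rfl
    · intro a _; rw [hφ]
  have hAval : ∀ l ∈ (Finset.univ : Finset (Fin k)).erase 0,
      Aco l = -(m * ρ^(2*s-3) * 2^(s-2)) * (1 - Real.cos (φ l)) ^ (s-1) := by
    intro l hl
    have hl0 : l ≠ 0 := (Finset.mem_erase.mp hl).1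
    have h1 := h1c l hl0
    have hXpos : 0 < X l := by
      rw [hX]
      have : (0:ℝ) < 2*(1-Real.cos (φ l)) := by linarith
      positivity
    rw [hAco]
    simp only []
    rw [div_eq_iff (ne_of_gt hXpos), hX]
    simp only []
    rw [Real.mul_rpow (by norm_num) h1.le]
    have e1 : ρ ^ (4-2*s) * ρ ^ (2*s-3) = ρ := by
      rw [← Real.rpow_add hρ]; norm_num
    have e2 : (2:ℝ) ^ (2-s) * (2:ℝ) ^ (s-2) = 1 := by
      rw [← Real.rpow_add (by norm_num)]; norm_num
    have e3 : (1-Real.cos (φ l)) ^ (2-s) * (1-Real.cos (φ l)) ^ (s-1) = 1-Real.cos (φ l) := by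
      rw [← Real.rpow_add h1]; norm_num
    linear_combination (m * (2:ℝ)^(s-2) * (1-Real.cos (φ l))^(s-1) * (2:ℝ)^(2-s) * (1-Real.cos (φ l))^(2-s)) * e1
      + (m * ρ * (1-Real.cos (φ l))^(s-1) * (1-Real.cos (φ l))^(2-s)) * e2
      + (m * ρ) * e3
  rw [Finset.sdiff_singleton_eq_erase, Finset.sum_congr rfl hAval, ← Finset.mul_sum, hS]
  -- final scalar identity
  rw [hb j, ← hu]
  rw [smul_smul, smul_smul, ← neg_smul]
  congr 1
  rw [hα, Ks]
  have hΓ : 0 < Real.Gamma s := Real.Gamma_pos_of_pos hs0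
  have hρ4 : (0:ℝ) < ρ ^ (4-2*s) := Real.rpow_pos_of_pos hρ _
  have e2' : (2:ℝ) ^ (2*s-1) = 2 ^ (s+1) * 2 ^ (s-2) := by
    rw [← Real.rpow_add (by norm_num), show s+1+(s-2) = 2*s-1 by ring]
  have eρ : ρ ^ (4-2*s) * ρ ^ (2*s-3) = ρ := by
    rw [← Real.rpow_add hρ]; norm_num
  have h2s2 : (0:ℝ) < (2:ℝ) ^ (s-2) := Real.rpow_pos_of_pos (by norm_num) _
  have h2s1 : (0:ℝ) < (2:ℝ) ^ (s+1) := Real.rpow_pos_of_pos (by norm_num) _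
  set S := ∑ l ∈ Finset.Ico 1 k, (1 - Real.cos (2*π*(l:ℝ)/k)) ^ (s - 1)
  rw [e2']
  field_simp
  linear_combination (-(m * Real.Gamma (2-s) * S)) * eρ
end
end

section
/- Let s ∈ (0,1), c ∈ ℝ, m₁,…,m_k ∈ ℝ all nonzero, and let b = (b₁,…,b_k) ∈ (ℝ²)^k have pairwise distinct components. Then b is a critical point of I (i.e. the total derivative of I at b vanishes) if and only if for every j ∈ {1,…,k}: c e₂ = (Γ(2-s)/(2^{2s-3} π Γ(s))) Σ_{i≠j} m_i (b_i - b_j)^⊥/|b_i - b_j|^{4-2s}; that is, critical points of I correspond to solutions of the traveling point-vortex system. -/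
open Real Finset RealInnerProductSpace

noncomputable section

lemma haux_norm_rpow (q : ℝ) {y : E2} (hy : y ≠ 0) :
    HasFDerivAt (fun z : E2 => ‖z‖ ^ q)
      ((q * ‖y‖ ^ (q - 2)) • (innerSL ℝ y : E2 →L[ℝ] ℝ)) y := by
  have hy0 : (0:ℝ) < ‖y‖ := norm_pos_iff.mpr hy
  have hyy : (⟪y, y⟫ : ℝ) ≠ 0 := by
    rw [real_inner_self_eq_norm_sq]; positivity
  have hinner : HasFDerivAt (fun z : E2 => (⟪z, z⟫ : ℝ))
      ((fderivInnerCLM ℝ (y, y)).comp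
        ((ContinuousLinearMap.id ℝ E2).prod (ContinuousLinearMap.id ℝ E2))) y :=
    (hasFDerivAt_id y).inner ℝ (hasFDerivAt_id y)
  have h2 := hinner.rpow_const (p := q / 2) (Or.inl hyy)
  have hfun : (fun z : E2 => (⟪z, z⟫ : ℝ) ^ (q / 2)) = fun z : E2 => ‖z‖ ^ q := by
    funext z
    rw [real_inner_self_eq_norm_sq, ← Real.rpow_natCast ‖z‖ 2,
      ← Real.rpow_mul (norm_nonneg z)]
    congr 1
    push_cast
    ring
  rw [hfun] at h2
  refine h2.congr_fderiv ?_
  ext v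
  simp only [ContinuousLinearMap.smul_apply, ContinuousLinearMap.comp_apply,
    ContinuousLinearMap.prod_apply, ContinuousLinearMap.id_apply, fderivInnerCLM_apply,
    innerSL_apply_apply, smul_eq_mul]
  rw [real_inner_self_eq_norm_sq, ← Real.rpow_natCast ‖y‖ 2,
    ← Real.rpow_mul (norm_nonneg y)]
  rw [real_inner_comm v y]
  rw [show ((2:ℕ):ℝ) * (q/2 - 1) = q - 2 by push_cast; ring]
  ring

lemma haux_sdiff_sum {M : Type*} [AddCommMonoid M] {k : ℕ} (i : Fin k) (f : Fin k → M) :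
    ∑ l ∈ Finset.univ \ {i}, f l = ∑ l, if l = i then 0 else f l := by
  rw [Finset.sum_ite, Finset.sum_const_zero, zero_add]
  congr 1
  ext l
  simp

lemma haux_pairs_comm {M : Type*} [AddCommMonoid M] {k : ℕ} (g : Fin k → Fin k → M) :
    ∑ i : Fin k, ∑ j ∈ Finset.univ \ {i}, g i j
      = ∑ j : Fin k, ∑ i ∈ Finset.univ \ {j}, g i j := by
  simp only [haux_sdiff_sum]
  rw [Finset.sum_comm]
  refine Finset.sum_congr rfl fun j _ => Finset.sum_congr rfl fun i _ => ?_
  by_cases h : i = j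
  · simp [h]
  · simp [h, Ne.symm h]

lemma haux_sum_apply {k : ℕ} (t : Finset (Fin k)) (f : Fin k → E2) (l : Fin 2) :
    (∑ i ∈ t, f i) l = ∑ i ∈ t, f i l := by rw [WithLp.ofLp_sum]; exact Finset.sum_apply l t _

lemma perp_apply0 (a : E2) : perp a 0 = a 1 := by simp [perp]

lemma perp_apply1 (a : E2) : perp a 1 = -(a 0) := by simp [perp]

/-- for nonzero intensities, a configuration with pairwise distinct points is a
critical point of `I` iff it solves the traveling point-vortex system:
`c e₂ = (Γ(2-s)/(2^{2s-3} π Γ(s))) Σ_{i≠j} m_i (b_i - b_j)^⊥/|b_i - b_j|^{4-2s}` for all `j`. -/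
theorem statement11 (s : ℝ) (hs : s ∈ Set.Ioo (0:ℝ) 1) (k : ℕ) (hk : 1 ≤ k) (c : ℝ)
    (m : Fin k → ℝ) (hm : ∀ i, m i ≠ 0) (b : Fin k → E2) (hb : Function.Injective b)
    (I : (Fin k → E2) → ℝ)
    (hI : ∀ x : Fin k → E2, I x = c * ∑ i, m i * ⟪x i, e1⟫
        + (Real.Gamma (1-s) / (Real.pi * 2 ^ (2*s-1) * Real.Gamma s)) *
            ∑ i, ∑ j ∈ Finset.univ \ {i}, m i * m j * ‖x i - x j‖ ^ (-(2 - 2*s))) :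
    fderiv ℝ I b = 0 ↔
      ∀ j : Fin k, c • e2
        = (Real.Gamma (2-s) / (2 ^ (2*s-3) * Real.pi * Real.Gamma s)) •
            ∑ i ∈ Finset.univ \ {j}, (m i / ‖b i - b j‖ ^ (4 - 2*s)) • perp (b i - b j) := by
  obtain ⟨hs0, hs1⟩ := hs
  have hΓs : (0:ℝ) < Real.Gamma s := Real.Gamma_pos_of_pos hs0
  have h1s : (1:ℝ) - s ≠ 0 := ne_of_gt (by linarith)
  set q : ℝ := -(2 - 2*s) with hq
  set K : ℝ := Real.Gamma (1-s) / (Real.pi * 2 ^ (2*s-1) * Real.Gamma s) with hK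
  set Ks' : ℝ := Real.Gamma (2-s) / (2 ^ (2*s-3) * Real.pi * Real.Gamma s) with hKs
  have hKspos : (0:ℝ) < Ks' := by
    rw [hKs]
    have h1 : (0:ℝ) < Real.Gamma (2-s) := Real.Gamma_pos_of_pos (by linarith)
    have h2 : (0:ℝ) < (2:ℝ) ^ (2*s-3) := Real.rpow_pos_of_pos two_pos _
    have h3 := Real.pi_pos
    positivity
  have hconst : 2 * K * q = -Ks' := by
    have hG : Real.Gamma (2-s) = (1-s) * Real.Gamma (1-s) := by
      rw [show (2:ℝ) - s = (1-s) + 1 by ring, Real.Gamma_add_one h1s]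
    have hp2 : (2:ℝ) ^ (2*s-1) = 4 * 2 ^ (2*s-3) := by
      rw [show 2*s - 1 = (2*s-3) + 2 by ring, Real.rpow_add two_pos]
      rw [show (2:ℝ) ^ (2:ℝ) = 4 by
        rw [show (2:ℝ) = ((2:ℕ):ℝ) by norm_num, Real.rpow_natCast]; norm_num]
      ring
    have h2 : ((2:ℝ) ^ (2*s-3)) ≠ 0 := ne_of_gt (Real.rpow_pos_of_pos two_pos _)
    rw [hK, hKs, hq, hG, hp2]
    have hπ := Real.pi_ne_zero
    have hΓs' := ne_of_gt hΓs
    field_simp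
    ring
  have hbij : ∀ i j : Fin k, i ≠ j → b i - b j ≠ 0 :=
    fun i j h => sub_ne_zero_of_ne (fun e => h (hb e))
  -- the derivative as an explicit continuous linear map
  set T1 : (Fin k → E2) →L[ℝ] ℝ :=
    ∑ i, m i • (((innerSL ℝ).flip e1).comp
      (ContinuousLinearMap.proj i : (Fin k → E2) →L[ℝ] E2)) with hT1
  set T2 : (Fin k → E2) →L[ℝ] ℝ :=
    ∑ i, ∑ j ∈ Finset.univ \ {i},
      (m i * m j) • ((q * ‖b i - b j‖ ^ (q - 2)) •
        ((innerSL ℝ (b i - b j)).comp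
          ((ContinuousLinearMap.proj i : (Fin k → E2) →L[ℝ] E2)
            - (ContinuousLinearMap.proj j : (Fin k → E2) →L[ℝ] E2)))) with hT2
  have hL : HasFDerivAt I (c • T1 + K • T2) b := by
    have hIfun : I = fun x => c * (∑ i, m i * ⟪x i, e1⟫)
        + K * ∑ i, ∑ j ∈ Finset.univ \ {i}, m i * m j * ‖x i - x j‖ ^ q := funext hI
    rw [hIfun]
    refine HasFDerivAt.add (HasFDerivAt.const_mul ?_ c) (HasFDerivAt.const_mul ?_ K)
    · rw [hT1]
      refine HasFDerivAt.fun_sum fun i _ => ?_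
      refine HasFDerivAt.const_mul ?_ (m i)
      have h := (((innerSL ℝ).flip e1).comp
        (ContinuousLinearMap.proj i : (Fin k → E2) →L[ℝ] E2)).hasFDerivAt (x := b)
      exact h.congr_of_eventuallyEq (Filter.Eventually.of_forall fun y => by
        simp only [ContinuousLinearMap.comp_apply, ContinuousLinearMap.flip_apply,
          ContinuousLinearMap.proj_apply, innerSL_apply_apply])
    · rw [hT2]
      refine HasFDerivAt.fun_sum fun i _ => HasFDerivAt.fun_sum fun j hj => ?_
      have hij : i ≠ j := by
        rcases Finset.mem_sdiff.mp hj with ⟨-, hj2⟩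
        simp only [Finset.mem_singleton] at hj2
        exact fun e => hj2 e.symm
      have hP : HasFDerivAt (fun x : Fin k → E2 => x i - x j)
          ((ContinuousLinearMap.proj i : (Fin k → E2) →L[ℝ] E2)
            - (ContinuousLinearMap.proj j : (Fin k → E2) →L[ℝ] E2)) b := by
        have h := ((ContinuousLinearMap.proj i : (Fin k → E2) →L[ℝ] E2)
          - (ContinuousLinearMap.proj j : (Fin k → E2) →L[ℝ] E2)).hasFDerivAt (x := b)
        exact h.congr_of_eventuallyEq (Filter.Eventually.of_forall fun y => by
          simp only [ContinuousLinearMap.sub_apply, ContinuousLinearMap.proj_apply])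
      have hnr := (haux_norm_rpow q (hbij i j hij)).comp b hP
      have h := hnr.const_mul (m i * m j)
      rw [ContinuousLinearMap.smul_comp] at h
      exact h
  have hfd : fderiv ℝ I b = c • T1 + K • T2 := hL.fderiv
  -- the gradient-like vectors
  set A : Fin k → E2 := fun j => (c * m j) • e1
    + ∑ i ∈ Finset.univ \ {j},
        ((2 * K * q * m j) * (m i * ‖b i - b j‖ ^ (q - 2))) • (b j - b i) with hA
  have key : ∀ v : Fin k → E2, (c • T1 + K • T2) v = ∑ j, ⟪A j, v j⟫ := by
    intro v
    have hTv : (c • T1 + K • T2) v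
        = c * ∑ i, m i * ⟪v i, e1⟫
          + K * ∑ i, ∑ j ∈ Finset.univ \ {i},
              (m i * m j) * ((q * ‖b i - b j‖ ^ (q - 2)) * ⟪b i - b j, v i - v j⟫) := by
      rw [hT1, hT2]
      simp only [ContinuousLinearMap.add_apply, ContinuousLinearMap.smul_apply,
        ContinuousLinearMap.coe_sum', Finset.sum_apply, ContinuousLinearMap.comp_apply,
        ContinuousLinearMap.flip_apply, ContinuousLinearMap.proj_apply,
        ContinuousLinearMap.sub_apply, innerSL_apply_apply, smul_eq_mul]
    have hRHS : ∀ j : Fin k, (⟪A j, v j⟫ : ℝ)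
        = c * m j * ⟪e1, v j⟫
          + ∑ i ∈ Finset.univ \ {j},
              ((2 * K * q * m j) * (m i * ‖b i - b j‖ ^ (q - 2))) * ⟪b j - b i, v j⟫ := by
      intro j
      rw [hA]
      rw [inner_add_left, sum_inner, real_inner_smul_left]
      refine congrArg₂ (· + ·) rfl ?_
      exact Finset.sum_congr rfl fun i _ => real_inner_smul_left _ _ _
    rw [hTv]
    simp only [hRHS]
    rw [Finset.sum_add_distrib]
    congr 1
    · rw [Finset.mul_sum]
      exact Finset.sum_congr rfl fun i _ => by rw [real_inner_comm]; ring
    · set E : Fin k → Fin k → ℝ :=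
        fun i j => K * ((m i * m j) * (q * ‖b i - b j‖ ^ (q - 2))) with hE
      have expand : K * ∑ i, ∑ j ∈ Finset.univ \ {i},
            (m i * m j) * ((q * ‖b i - b j‖ ^ (q - 2)) * ⟪b i - b j, v i - v j⟫)
          = (∑ i, ∑ j ∈ Finset.univ \ {i}, E i j * ⟪b i - b j, v i⟫)
            - ∑ i, ∑ j ∈ Finset.univ \ {i}, E i j * ⟪b i - b j, v j⟫ := by
        rw [Finset.mul_sum, ← Finset.sum_sub_distrib]
        refine Finset.sum_congr rfl fun i _ => ?_
        rw [Finset.mul_sum, ← Finset.sum_sub_distrib]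
        refine Finset.sum_congr rfl fun j _ => ?_
        rw [hE, inner_sub_right]
        ring
      rw [expand,
        haux_pairs_comm (fun i j => E i j * (⟪b i - b j, v j⟫ : ℝ)),
        ← Finset.sum_sub_distrib]
      refine Finset.sum_congr rfl fun j _ => ?_
      rw [← Finset.sum_sub_distrib]
      refine Finset.sum_congr rfl fun i _ => ?_
      have hinn : (⟪b i - b j, v j⟫ : ℝ) = -⟪b j - b i, v j⟫ := by
        rw [← inner_neg_left, neg_sub]
      rw [hinn]
      simp only [hE]
      rw [norm_sub_rev (b j) (b i)]
      ring
  have hAeq : ∀ j : Fin k, (A j = 0 ↔ c • e2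
      = Ks' • ∑ i ∈ Finset.univ \ {j},
          (m i / ‖b i - b j‖ ^ (4 - 2*s)) • perp (b i - b j)) := by
    intro j
    have hpow : ∀ i : Fin k, m i / ‖b i - b j‖ ^ (4 - 2*s)
        = m i * ‖b i - b j‖ ^ (q - 2) := by
      intro i
      rw [div_eq_mul_inv, ← Real.rpow_neg (norm_nonneg _)]
      congr 1
      rw [hq]; ring
    have hcoord : ∀ X Y : E2, X = Y ↔ X 0 = Y 0 ∧ X 1 = Y 1 := by
      intro X Y
      constructor
      · intro h; exact ⟨by rw [h], by rw [h]⟩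
      · rintro ⟨h0, h1⟩
        ext l
        fin_cases l
        · exact h0
        · exact h1
    set P0 : ℝ := ∑ i ∈ Finset.univ \ {j},
      (m i * ‖b i - b j‖ ^ (q - 2)) * (b j 0 - b i 0) with hP0
    set P1 : ℝ := ∑ i ∈ Finset.univ \ {j},
      (m i * ‖b i - b j‖ ^ (q - 2)) * (b j 1 - b i 1) with hP1
    have hA0 : A j 0 = c * m j + (2 * K * q * m j) * P0 := by
      rw [hA]
      simp only [PiLp.add_apply, PiLp.smul_apply, smul_eq_mul, haux_sum_apply,
        PiLp.sub_apply]
      rw [show e1 0 = 1 by simp [e1], hP0, Finset.mul_sum, mul_one]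
      refine congrArg₂ (· + ·) rfl ?_
      exact Finset.sum_congr rfl fun i _ => by ring
    have hA1 : A j 1 = (2 * K * q * m j) * P1 := by
      rw [hA]
      simp only [PiLp.add_apply, PiLp.smul_apply, smul_eq_mul, haux_sum_apply,
        PiLp.sub_apply]
      rw [show e1 1 = 0 by simp [e1], hP1, Finset.mul_sum, mul_zero, zero_add]
      exact Finset.sum_congr rfl fun i _ => by ring
    have hR0 : (Ks' • ∑ i ∈ Finset.univ \ {j},
        (m i / ‖b i - b j‖ ^ (4 - 2*s)) • perp (b i - b j)) 0 = Ks' * (-P1) := by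
      simp only [hpow, PiLp.smul_apply, smul_eq_mul, haux_sum_apply, perp_apply0,
        PiLp.sub_apply]
      rw [hP1, ← Finset.sum_neg_distrib, Finset.mul_sum, Finset.mul_sum]
      exact Finset.sum_congr rfl fun i _ => by ring
    have hR1 : (Ks' • ∑ i ∈ Finset.univ \ {j},
        (m i / ‖b i - b j‖ ^ (4 - 2*s)) • perp (b i - b j)) 1 = Ks' * P0 := by
      simp only [hpow, PiLp.smul_apply, smul_eq_mul, haux_sum_apply, perp_apply1,
        PiLp.sub_apply]
      rw [hP0, Finset.mul_sum, Finset.mul_sum]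
      exact Finset.sum_congr rfl fun i _ => by ring
    have he2_0 : (c • e2) 0 = 0 := by
      simp [e2]
    have he2_1 : (c • e2) 1 = c := by
      simp [e2]
    rw [hcoord (A j) 0, hcoord (c • e2) _, hA0, hA1, hR0, hR1, he2_0, he2_1]
    have hz0 : (0 : E2) 0 = 0 := rfl
    have hz1 : (0 : E2) 1 = 0 := rfl
    rw [hz0, hz1]
    constructor
    · rintro ⟨u1, u2⟩
      rw [hconst] at u1 u2
      constructor
      · have hP1z : P1 = 0 := by
          have h' : (-Ks' * m j) * P1 = 0 := by linear_combination u2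
          exact (mul_eq_zero.mp h').resolve_left
            (mul_ne_zero (neg_ne_zero.mpr (ne_of_gt hKspos)) (hm j))
        rw [hP1z]; ring
      · have h' : m j * (c - Ks' * P0) = 0 := by linear_combination u1
        have h2 := (mul_eq_zero.mp h').resolve_left (hm j)
        linarith
    · rintro ⟨w1, w2⟩
      have hP1z : P1 = 0 := by
        have h' : Ks' * P1 = 0 := by linear_combination w1
        exact (mul_eq_zero.mp h').resolve_left (ne_of_gt hKspos)
      constructor
      · rw [hconst, w2]; ring
      · rw [hconst, hP1z]; ring
  rw [hfd]
  constructor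
  · intro h j
    rw [← hAeq j]
    have hz := congrArg (fun (L : (Fin k → E2) →L[ℝ] ℝ) => L (Pi.single j (A j))) h
    simp only [ContinuousLinearMap.zero_apply] at hz
    rw [key] at hz
    have hcollapse : ∑ j', ⟪A j', (Pi.single j (A j) : Fin k → E2) j'⟫ = (⟪A j, A j⟫:ℝ) := by
      rw [Finset.sum_eq_single j]
      · rw [Pi.single_eq_same]
      · intro l _ hl
        rw [Pi.single_eq_of_ne hl, inner_zero_right]
      · intro habs; exact absurd (Finset.mem_univ j) habs
    rw [hcollapse] at hz
    exact inner_self_eq_zero.mp hz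
  · intro h
    have hA0 : ∀ j, A j = 0 := fun j => (hAeq j).mpr (h j)
    ext v
    rw [key]
    simp [hA0]
end
end
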